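/- Let X be a Fréchet sequence space over ℤ (a subspace of 𝕂^ℤ such that convergence in X implies coordinatewise convergence) in which the canonical vectors (e_n)_{n∈ℤ} form a basis, and suppose the bilateral weighted backward shift B_w(x)_n = w_n x_{n+1} with nonzero weights is continuous on X. If for some j₀ ∈ ℤ one has liminf_{n→∞} (1/n) Σ_{k=1}^{n} d(w_{j₀−k}⋯w_{j₀−1} e_{j₀−k}, 0) = 0, then for every i ∈ ℤ one has liminf_{n→∞} (1/n) Σ_{k=1}^{n} d(w_{i−k}⋯w_{i−1} e_{i−k}, 0) = 0. -/

import Mathlib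

open Filter

lemma minmax_aux (a t : ℝ) (ha : 0 ≤ a) (ht : 0 ≤ t) :
    min 1 (a * t) ≤ max 1 a * min 1 t := by
  rcases le_total a 1 with h | h
  · calc min 1 (a * t) ≤ min 1 t := by
          apply min_le_min le_rfl
          nlinarith
      _ ≤ max 1 a * min 1 t := by
          apply le_mul_of_one_le_left (le_min zero_le_one ht) (le_max_left 1 a)
  · rw [max_eq_right h]
    calc min 1 (a * t) ≤ min a (a * t) := min_le_min h le_rfl
      _ = a * min 1 t := by rw [mul_min_of_nonneg _ _ ha, mul_one]


lemma master_liminf (u v : ℕ → ℝ) (hu0 : ∀ n, 0 ≤ u n) (hu1 : ∀ n, u n ≤ 1) (hv1 : ∀ n, v n ≤ 1)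
    (hv : liminf v atTop = 0) (C : ℝ) (hC : 0 < C) (m : ℕ)
    (h : ∀ᶠ n : ℕ in atTop, u (n - m) ≤ C / (n : ℝ) + C * v n) :
    liminf u atTop = 0 := by
  have hbdd : IsBoundedUnder (· ≥ ·) atTop u := isBoundedUnder_of ⟨0, fun n => hu0 n⟩
  refine le_antisymm ?_ ?_
  swap
  · exact le_liminf_of_le (isCoboundedUnder_ge_of_le _ hu1) (Eventually.of_forall hu0)
  refine le_of_forall_pos_le_add ?_
  intro ε hε
  rw [zero_add]
  refine liminf_le_of_frequently_le ?_ hbdd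
  obtain ⟨N₀, hN₀⟩ := exists_nat_ge (2 * C / ε)
  set N : ℕ := N₀ + 1 with hNdef
  have hNpos : (0:ℝ) < N := by positivity
  have hNge : 2 * C / ε ≤ (N:ℝ) := le_trans hN₀ (by rw [hNdef]; push_cast; linarith)
  have hCN : C / (N:ℝ) ≤ ε / 2 := by
    rw [div_le_iff₀ hNpos]
    rw [div_le_iff₀ hε] at hNge
    nlinarith
  set δ : ℝ := ε / (2 * C) with hδdef
  have hδpos : 0 < δ := by positivity
  have hfreq : ∃ᶠ n in atTop, v n < δ :=
    frequently_lt_of_liminf_lt (isCoboundedUnder_ge_of_le _ hv1) (by rw [hv]; exact hδpos)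
  rw [frequently_atTop]
  intro a
  have hev : ∀ᶠ n : ℕ in atTop, (N ≤ n ∧ a + m ≤ n) ∧ u (n - m) ≤ C / (n:ℝ) + C * v n :=
    ((eventually_ge_atTop N).and (eventually_ge_atTop (a + m))).and h
  obtain ⟨n, hvn, ⟨hnN, hnam⟩, hun⟩ := (hfreq.and_eventually hev).exists
  refine ⟨n - m, by omega, ?_⟩
  have h1 : C / (n:ℝ) ≤ C / N := by
    apply div_le_div_of_nonneg_left hC.le hNpos
    exact_mod_cast hnN
  have h2 : C * v n ≤ C * δ := mul_le_mul_of_nonneg_left hvn.le hC.le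
  have h3 : C * δ = ε / 2 := by rw [hδdef]; field_simp
  linarith

lemma sumshift_aux (h : ℕ → ℝ) (n : ℕ) :
    ∑ k ∈ Finset.Icc 1 (n + 1), h k = h 1 + ∑ k ∈ Finset.Icc 1 n, h (k + 1) := by
  induction n with
  | zero => simp
  | succ n ih =>
      rw [Finset.sum_Icc_succ_top (by omega), ih, Finset.sum_Icc_succ_top (by omega : 1 ≤ n + 1)]
      ring

lemma aux_transfer (F : ℤ → ℕ → ℝ) (hF0 : ∀ i k, 0 ≤ F i k) (hF1 : ∀ i k, F i k ≤ 1)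
    (Cd Cu : ℤ → ℝ) (hCd : ∀ i, 0 < Cd i) (hCu : ∀ i, 0 < Cu i)
    (hdown : ∀ i (k : ℕ), F (i - 1) k ≤ Cd i * F i (k + 1))
    (hup : ∀ i (k : ℕ), F (i + 1) (k + 1) ≤ Cu i * F i k)
    (j₀ : ℤ)
    (h0 : liminf (fun n : ℕ => (1 / (n : ℝ)) * ∑ k ∈ Finset.Icc 1 n, F j₀ k) atTop = 0) :
    ∀ i, liminf (fun n : ℕ => (1 / (n : ℝ)) * ∑ k ∈ Finset.Icc 1 n, F i k) atTop = 0 := by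
  set A : ℤ → ℕ → ℝ := fun i n => (1 / (n : ℝ)) * ∑ k ∈ Finset.Icc 1 n, F i k with hA
  have hA0 : ∀ i n, 0 ≤ A i n := fun i n =>
    mul_nonneg (by positivity) (Finset.sum_nonneg fun k _ => hF0 i k)
  have hA1 : ∀ i n, A i n ≤ 1 := by
    intro i n
    rcases Nat.eq_zero_or_pos n with rfl | hn
    · simp [hA]
    · have hs : ∑ k ∈ Finset.Icc 1 n, F i k ≤ ∑ k ∈ Finset.Icc 1 n, (1:ℝ) :=
        Finset.sum_le_sum fun k _ => hF1 i k
      have hcard : ∑ k ∈ Finset.Icc 1 n, (1:ℝ) = n := by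
        rw [Finset.sum_const, Nat.card_Icc]; simp
      have hnpos : (0:ℝ) < n := by exact_mod_cast hn
      calc A i n ≤ (1 / (n:ℝ)) * n := by
            rw [hcard] at hs
            exact mul_le_mul_of_nonneg_left hs (by positivity)
        _ = 1 := by field_simp
  have stepdown : ∀ i, liminf (A i) atTop = 0 → liminf (A (i - 1)) atTop = 0 := by
    intro i hi
    apply master_liminf (A (i-1)) (A i) (hA0 _) (hA1 _) (hA1 i) hi (2 * Cd i) (by have := hCd i; linarith) 1
    filter_upwards [eventually_ge_atTop 2] with n hn
    obtain ⟨t, rfl⟩ : ∃ t, n = t + 1 := ⟨n - 1, by omega⟩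
    have ht : 1 ≤ t := by omega
    have htpos : (0:ℝ) < t := by exact_mod_cast ht
    simp only [Nat.add_sub_cancel]
    set S : ℝ := ∑ k ∈ Finset.Icc 1 (t+1), F i k with hS
    have hS0 : 0 ≤ S := Finset.sum_nonneg fun k _ => hF0 i k
    have h1 : ∑ k ∈ Finset.Icc 1 t, F (i-1) k ≤ Cd i * ∑ k ∈ Finset.Icc 1 t, F i (k+1) := by
      rw [Finset.mul_sum]; exact Finset.sum_le_sum fun k _ => hdown i k
    have h2 : ∑ k ∈ Finset.Icc 1 t, F i (k+1) ≤ S := by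
      have := sumshift_aux (F i) t
      have := hF0 i 1
      rw [hS]; linarith
    have h3 : (1/(t:ℝ)) ≤ 2/((t:ℝ)+1) := by
      rw [div_le_div_iff₀ htpos (by linarith)]
      have ht' : (1:ℝ) ≤ (t:ℝ) := by exact_mod_cast ht
      linarith
    have hAi : A i (t+1) = (1/((t:ℝ)+1)) * S := by
      simp only [hA, hS]; push_cast; ring
    have hmain : A (i-1) t ≤ 2 * Cd i * A i (t+1) := by
      calc A (i-1) t ≤ (1/(t:ℝ)) * (Cd i * S) := by
            refine mul_le_mul_of_nonneg_left ?_ (by positivity)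
            exact h1.trans (mul_le_mul_of_nonneg_left h2 (hCd i).le)
        _ ≤ (2/((t:ℝ)+1)) * (Cd i * S) :=
            mul_le_mul_of_nonneg_right h3 (mul_nonneg (hCd i).le hS0)
        _ = 2 * Cd i * A i (t+1) := by rw [hAi]; ring
    have hnn : (0:ℝ) ≤ 2 * Cd i / (((t:ℕ):ℝ) + 1) :=
      div_nonneg (by have := hCd i; linarith) (by positivity)
    push_cast
    linarith
  have stepup : ∀ i, liminf (A i) atTop = 0 → liminf (A (i + 1)) atTop = 0 := by
    intro i hi
    apply master_liminf (A (i+1)) (A i) (hA0 _) (hA1 _) (hA1 i) hi (Cu i + 1) (by have := hCu i; linarith) 0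
    filter_upwards [eventually_ge_atTop 1] with n hn
    obtain ⟨t, rfl⟩ : ∃ t, n = t + 1 := ⟨n - 1, by omega⟩
    simp only [Nat.sub_zero]
    set S : ℝ := ∑ k ∈ Finset.Icc 1 (t+1), F i k with hS
    have hS0 : 0 ≤ S := Finset.sum_nonneg fun k _ => hF0 i k
    have htpos : (0:ℝ) < (t:ℝ) + 1 := by positivity
    have h1 := sumshift_aux (F (i+1)) t
    have h2 : ∑ k ∈ Finset.Icc 1 t, F (i+1) (k+1) ≤ Cu i * ∑ k ∈ Finset.Icc 1 t, F i k := by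
      rw [Finset.mul_sum]; exact Finset.sum_le_sum fun k _ => hup i k
    have h3 : ∑ k ∈ Finset.Icc 1 t, F i k ≤ S := by
      rw [hS, Finset.sum_Icc_succ_top (by omega : 1 ≤ t + 1)]
      have := hF0 i (t+1)
      linarith
    have h4 : ∑ k ∈ Finset.Icc 1 t, F i k ≥ 0 := Finset.sum_nonneg fun k _ => hF0 i k
    have hAi : A i (t+1) = (1/((t:ℝ)+1)) * S := by simp only [hA, hS]; push_cast; ring
    have hF11 := hF1 (i+1) 1
    have key : A (i+1) (t+1) ≤ 1/((t:ℝ)+1) + Cu i * A i (t+1) := by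
      have hsum : ∑ k ∈ Finset.Icc 1 (t+1), F (i+1) k ≤ 1 + Cu i * S := by
        have : Cu i * ∑ k ∈ Finset.Icc 1 t, F i k ≤ Cu i * S :=
          mul_le_mul_of_nonneg_left h3 (hCu i).le
        linarith
      have : A (i+1) (t+1) ≤ (1/((t:ℝ)+1)) * (1 + Cu i * S) := by
        simp only [hA]
        push_cast
        exact mul_le_mul_of_nonneg_left hsum (by positivity)
      rw [hAi]
      calc A (i+1) (t+1) ≤ (1/((t:ℝ)+1)) * (1 + Cu i * S) := this
        _ = 1/((t:ℝ)+1) + Cu i * ((1/((t:ℝ)+1)) * S) := by ring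
    have hA0' := hA0 i (t+1)
    have hCup := hCu i
    have h5 : 1/((t:ℝ)+1) ≤ (Cu i + 1)/(((t:ℕ)+1:ℕ):ℝ) := by
      push_cast
      rw [div_le_div_iff₀ htpos htpos]
      nlinarith
    have h6 : Cu i * A i (t+1) ≤ (Cu i + 1) * A i (t+1) := by nlinarith
    push_cast at h5 ⊢
    linarith
  intro i
  have key : ∀ m : ℤ, liminf (A (j₀ + m)) atTop = 0 := by
    intro m
    induction m using Int.induction_on with
    | zero => rw [add_zero]; exact h0
    | succ k ih =>
        have h := stepup _ ih
        rw [show (j₀ + ((k:ℤ) + 1)) = j₀ + (k:ℤ) + 1 from by ring]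
        exact h
    | pred k ih =>
        have h := stepdown _ ih
        rw [show (j₀ + (-(k:ℤ) - 1)) = j₀ + (-(k:ℤ)) - 1 from by ring]
        exact h
  have h := key (i - j₀)
  rw [show j₀ + (i - j₀) = i from by ring] at h
  exact h


theorem stmt_8 {𝕂 : Type*} [RCLike 𝕂] (X : Submodule 𝕂 (ℤ → 𝕂))
    (p : ℕ → Seminorm 𝕂 X) (hp : Monotone p)
    (d : X → X → ℝ)
    (hd : ∀ x y : X, d x y = ∑' k : ℕ, (1 / 2 : ℝ) ^ (k + 1) * min 1 (p (k + 1) (x - y)))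
    (e : ℤ → X) (he : ∀ n : ℤ, (e n : ℤ → 𝕂) = fun j => if j = n then 1 else 0)
    (w : ℤ → 𝕂) (hw : ∀ n, w n ≠ 0)
    (B : X →ₗ[𝕂] X)
    (hB : ∀ (x : X) (n : ℤ), (B x : ℤ → 𝕂) n = w n * (x : ℤ → 𝕂) (n + 1))
    (hBcont : ∀ ε > (0 : ℝ), ∃ δ > (0 : ℝ), ∀ x : X, d x 0 < δ → d (B x) 0 < ε)
    (j₀ : ℤ)
    (h0 : liminf (fun n : ℕ =>
        (1 / (n : ℝ)) * ∑ k ∈ Finset.Icc 1 n,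
          d ((∏ j ∈ Finset.Icc 1 k, w (j₀ - (j : ℤ))) • e (j₀ - (k : ℤ))) 0) atTop = 0) :
    ∀ i : ℤ, liminf (fun n : ℕ =>
        (1 / (n : ℝ)) * ∑ k ∈ Finset.Icc 1 n,
          d ((∏ j ∈ Finset.Icc 1 k, w (i - (j : ℤ))) • e (i - (k : ℤ))) 0) atTop = 0 := by
  -- basic facts about d
  have hd0 : ∀ x : X, d x 0 = ∑' k : ℕ, (1/2:ℝ)^(k+1) * min 1 (p (k+1) x) := by
    intro x; rw [hd]; simp
  have hterm_nonneg : ∀ (x : X) (k : ℕ), 0 ≤ (1/2:ℝ)^(k+1) * min 1 (p (k+1) x) := by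
    intro x k
    exact mul_nonneg (by positivity) (le_min zero_le_one (apply_nonneg _ _))
  have hgeom : Summable (fun k : ℕ => (1/2:ℝ)^(k+1)) := by
    have h := summable_geometric_two.mul_right (1/2)
    simpa [pow_succ] using h
  have hsumm : ∀ x : X, Summable (fun k : ℕ => (1/2:ℝ)^(k+1) * min 1 (p (k+1) x)) := by
    intro x
    refine Summable.of_nonneg_of_le (hterm_nonneg x) (fun k => ?_) hgeom
    exact mul_le_of_le_one_right (by positivity) (min_le_left _ _)
  have hd_nonneg : ∀ x : X, 0 ≤ d x 0 := by
    intro x; rw [hd0]; exact tsum_nonneg (hterm_nonneg x)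
  have hd_le_one : ∀ x : X, d x 0 ≤ 1 := by
    intro x
    rw [hd0]
    calc ∑' k : ℕ, (1/2:ℝ)^(k+1) * min 1 (p (k+1) x)
        ≤ ∑' k : ℕ, (1/2:ℝ)^(k+1) := by
          refine (hsumm x).tsum_le_tsum (fun k => ?_) hgeom
          exact mul_le_of_le_one_right (by positivity) (min_le_left _ _)
      _ = 1 := by
          have h1 : ∀ k : ℕ, (1/2:ℝ)^(k+1) = (1/2:ℝ)^k * (1/2) := fun k => pow_succ _ _
          rw [tsum_congr h1, tsum_mul_right, tsum_geometric_two]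
          norm_num
  have hd_smul : ∀ (c : 𝕂) (x : X), d (c • x) 0 ≤ max 1 ‖c‖ * d x 0 := by
    intro c x
    rw [hd0, hd0, ← tsum_mul_left]
    refine (hsumm _).tsum_le_tsum (fun k => ?_) ((hsumm x).mul_left _)
    have hps : p (k+1) (c • x) = ‖c‖ * p (k+1) x := map_smul_eq_mul _ _ _
    rw [hps]
    calc (1/2:ℝ)^(k+1) * min 1 (‖c‖ * p (k+1) x)
        ≤ (1/2:ℝ)^(k+1) * (max 1 ‖c‖ * min 1 (p (k+1) x)) :=
          mul_le_mul_of_nonneg_left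
            (minmax_aux _ _ (norm_nonneg c) (apply_nonneg _ _)) (by positivity)
      _ = max 1 ‖c‖ * ((1/2:ℝ)^(k+1) * min 1 (p (k+1) x)) := by ring
  -- the product shift identity
  have prodshift : ∀ (i : ℤ) (k : ℕ),
      (∏ j ∈ Finset.Icc 1 (k+1), w (i - (j:ℤ))) = w (i-1) * ∏ j ∈ Finset.Icc 1 k, w (i - 1 - (j:ℤ)) := by
    intro i k
    induction k with
    | zero => simp
    | succ k ih =>
        rw [Finset.prod_Icc_succ_top (by omega : 1 ≤ k + 1 + 1), ih,
          Finset.prod_Icc_succ_top (by omega : 1 ≤ k + 1), mul_assoc]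
        congr 2
        push_cast; ring
  -- apply the transfer lemma
  have hdown : ∀ (i : ℤ) (k : ℕ),
      d ((∏ j ∈ Finset.Icc 1 k, w (i - 1 - (j : ℤ))) • e (i - 1 - (k : ℤ))) 0
        ≤ max 1 ‖(w (i-1))⁻¹‖ *
          d ((∏ j ∈ Finset.Icc 1 (k+1), w (i - (j : ℤ))) • e (i - ((k+1:ℕ) : ℤ))) 0 := by
    intro i k
    have hvec : (∏ j ∈ Finset.Icc 1 k, w (i - 1 - (j:ℤ))) • e (i - 1 - (k:ℤ))
        = (w (i-1))⁻¹ • ((∏ j ∈ Finset.Icc 1 (k+1), w (i - (j:ℤ))) • e (i - ((k+1:ℕ):ℤ))) := by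
      rw [smul_smul, prodshift, inv_mul_cancel_left₀ (hw _)]
      congr 1
      push_cast; ring
    rw [hvec]
    exact hd_smul _ _
  have hup : ∀ (i : ℤ) (k : ℕ),
      d ((∏ j ∈ Finset.Icc 1 (k+1), w (i + 1 - (j : ℤ))) • e (i + 1 - ((k+1:ℕ) : ℤ))) 0
        ≤ max 1 ‖w i‖ *
          d ((∏ j ∈ Finset.Icc 1 k, w (i - (j : ℤ))) • e (i - (k : ℤ))) 0 := by
    intro i k
    have hvec : (∏ j ∈ Finset.Icc 1 (k+1), w (i + 1 - (j:ℤ))) • e (i + 1 - ((k+1:ℕ):ℤ))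
        = w i • ((∏ j ∈ Finset.Icc 1 k, w (i - (j:ℤ))) • e (i - (k:ℤ))) := by
      have h1 := prodshift (i+1) k
      simp only [add_sub_cancel_right] at h1
      rw [smul_smul, h1]
      congr 1
      push_cast; ring
    rw [hvec]
    exact hd_smul _ _
  exact aux_transfer
    (fun i k => d ((∏ j ∈ Finset.Icc 1 k, w (i - (j : ℤ))) • e (i - (k : ℤ))) 0)
    (fun i k => hd_nonneg _) (fun i k => hd_le_one _)
    (fun i => max 1 ‖(w (i-1))⁻¹‖) (fun i => max 1 ‖w i‖)
    (fun i => lt_of_lt_of_le one_pos (le_max_left _ _))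
    (fun i => lt_of_lt_of_le one_pos (le_max_left _ _))
    hdown hup j₀ h0
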